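/- arXiv:1711.08340 — 3 statements merged into one kernel-verified Lean document; each statement's English description precedes it below -/
import Mathlib

section
/- For every integer M ≥ 2 and all 1 ≤ j, l ≤ M−1, the integral ∫_0^1 φ_j(κ_M(y)) φ_l(κ_M(y)) dy equals 1 if j = l and 0 otherwise, where φ_j(x) = √2 sin(jπx) and κ_M(y) = ⌊My⌋/M. -/
open Real Finset MeasureTheory


lemma sum_cos_even (M : ℕ) (m : ℤ) (hM : 0 < M) (hm : ¬ (M:ℤ) ∣ m) :
    ∑ k ∈ range M, Real.cos (2*π*m*k/M) = 0 := by
  have hM0 : (M:ℝ) ≠ 0 := Nat.cast_ne_zero.2 hM.ne'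
  set θ : ℝ := 2*π*m/M with hθ
  set x : ℂ := Complex.exp (θ * Complex.I) with hx
  have hxk : ∀ k : ℕ, x ^ k = Complex.exp ((k*θ : ℝ) * Complex.I) := by
    intro k
    rw [hx, ← Complex.exp_nat_mul]
    push_cast
    ring_nf
  have hMθ : (M:ℝ) * θ = 2*π*m := by rw [hθ]; field_simp
  have hxM : x ^ M = 1 := by
    rw [hxk, hMθ]
    have : ((2*π*(m:ℝ) : ℝ) : ℂ) * Complex.I = (m : ℂ) * (2 * π * Complex.I) := by
      push_cast; ring
    rw [this, Complex.exp_int_mul_two_pi_mul_I]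
  have hx1 : x ≠ 1 := by
    intro h
    rw [hx, Complex.exp_eq_one_iff] at h
    obtain ⟨n, hn⟩ := h
    have h2 : (θ : ℂ) = (n : ℂ) * (2*π) :=
      mul_right_cancel₀ Complex.I_ne_zero
        (by rw [hn]; ring : (θ:ℂ) * Complex.I = ((n:ℂ) * (2*π)) * Complex.I)
    have h3 : θ = n * (2*π) := by exact_mod_cast h2
    have hπ := Real.pi_ne_zero
    rw [hθ] at h3
    have h3' : 2*π*(m:ℝ) = n * (2*π) * M := by field_simp at h3; rw [h3]; ring
    have h4 : (m:ℝ) = n * M := by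
      have h3'' : (2*π) * (m:ℝ) = (2*π) * (n * M) := by linarith
      exact mul_left_cancel₀ (by positivity) h3''
    have h5 : m = n * M := by exact_mod_cast h4
    exact hm ⟨n, by rw [h5]; ring⟩
  have hsum : ∑ k ∈ range M, x ^ k = 0 := by
    rw [geom_sum_eq hx1, hxM]
    simp
  have h := congrArg Complex.re hsum
  rw [Complex.re_sum, Complex.zero_re] at h
  simp only [hxk, Complex.exp_ofReal_mul_I_re] at h
  rw [← h]
  apply Finset.sum_congr rfl
  intro k _
  congr 1
  rw [hθ]; field_simp


lemma sum_cos_odd (M : ℕ) (n : ℤ) (hM : 0 < M) (hn : Odd n) :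
    ∑ k ∈ range M, Real.cos (n*π*k/M) = 1 := by
  have hM0 : (M:ℝ) ≠ 0 := Nat.cast_ne_zero.2 hM.ne'
  set θ : ℝ := n*π/M with hθ
  set x : ℂ := Complex.exp (θ * Complex.I) with hx
  have hxk : ∀ k : ℕ, x ^ k = Complex.exp ((k*θ : ℝ) * Complex.I) := by
    intro k
    rw [hx, ← Complex.exp_nat_mul]
    push_cast
    ring_nf
  have hMθ : (M:ℝ) * θ = n*π := by rw [hθ]; field_simp
  have hxM : x ^ M = -1 := by
    rw [hxk, hMθ]
    have h1 : (((n:ℝ)*π : ℝ) : ℂ) * Complex.I = (n : ℂ) * (π * Complex.I) := by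
      push_cast; ring
    rw [h1, Complex.exp_int_mul, Complex.exp_pi_mul_I, Odd.neg_one_zpow hn]
  have hx1 : x ≠ 1 := by
    intro h
    rw [h, one_pow] at hxM
    norm_num at hxM
  have hsum : ∑ k ∈ range M, x ^ k = -2 / (x - 1) := by
    rw [geom_sum_eq hx1, hxM]
    norm_num
  -- real part of x
  have hxre : x.re = Real.cos θ := Complex.exp_ofReal_mul_I_re θ
  have hxim : x.im = Real.sin θ := by
    rw [hx, Complex.exp_ofReal_mul_I_im]
  have hcos1 : Real.cos θ ≠ 1 := by
    intro hc
    apply hx1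
    have hs : Real.sin θ = 0 := by
      have := Real.sin_sq_add_cos_sq θ
      nlinarith
    apply Complex.ext <;> simp [hxre, hxim, hc, hs]
  have hre : (-2 / (x - 1) : ℂ).re = 1 := by
    rw [Complex.div_re]
    have hnsq : Complex.normSq (x - 1) = 2 - 2 * Real.cos θ := by
      rw [Complex.normSq_apply]
      simp only [Complex.sub_re, Complex.sub_im, Complex.one_re, Complex.one_im, hxre, hxim]
      nlinarith [Real.sin_sq_add_cos_sq θ]
    rw [hnsq]
    simp only [Complex.neg_re, Complex.neg_im, Complex.sub_re, Complex.sub_im, Complex.one_re,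
      Complex.one_im, hxre, hxim]
    norm_num
    rw [div_eq_one_iff_eq (by intro h; apply hcos1; linarith)]
    ring
  have h := congrArg Complex.re hsum
  rw [Complex.re_sum, hre] at h
  simp only [hxk, Complex.exp_ofReal_mul_I_re] at h
  rw [← h]
  apply Finset.sum_congr rfl
  intro k _
  congr 1
  rw [hθ]; field_simp

lemma sum_sin_orth (M j l : ℕ) (hM : 2 ≤ M) (hj1 : 1 ≤ j) (hj2 : j ≤ M - 1)
    (hl1 : 1 ≤ l) (hl2 : l ≤ M - 1) :
    ∑ k ∈ range M, 2 * Real.sin (j*π*(k/M)) * Real.sin (l*π*(k/M)) =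
      if j = l then (M:ℝ) else 0 := by
  have hM0 : 0 < M := by omega
  have hMR : (M:ℝ) ≠ 0 := Nat.cast_ne_zero.2 hM0.ne'
  have hjM : j < M := by omega
  have hlM : l < M := by omega
  have key : ∀ k ∈ range M, 2 * Real.sin (j*π*(k/M)) * Real.sin (l*π*(k/M)) =
      Real.cos ((((j:ℤ)-l : ℤ) : ℝ)*π*k/M) - Real.cos ((((j:ℤ)+l : ℤ) : ℝ)*π*k/M) := by
    intro k _
    push_cast
    rw [show ((j:ℝ)-l)*π*k/M = j*π*(k/M) - l*π*(k/M) by field_simp,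
        show ((j:ℝ)+l)*π*k/M = j*π*(k/M) + l*π*(k/M) by field_simp,
        Real.cos_sub, Real.cos_add]
    ring
  rw [Finset.sum_congr rfl key, Finset.sum_sub_distrib]
  by_cases hjl : j = l
  · subst hjl
    have h1 : ∑ k ∈ range M, Real.cos ((((j:ℤ)-j : ℤ) : ℝ)*π*k/M) = M := by
      have : ∀ k ∈ range M, Real.cos ((((j:ℤ)-j : ℤ) : ℝ)*π*k/M) = 1 := by
        intro k _; simp
      rw [Finset.sum_congr rfl this]; simp
    have h2 : ∑ k ∈ range M, Real.cos ((((j:ℤ)+j : ℤ) : ℝ)*π*k/M) = 0 := by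
      have hc : ∀ k ∈ range M, Real.cos ((((j:ℤ)+j : ℤ) : ℝ)*π*k/M)
          = Real.cos (2*π*((j:ℤ) : ℝ)*k/M) := by
        intro k _; congr 1; push_cast; ring
      rw [Finset.sum_congr rfl hc]
      exact sum_cos_even M j hM0 (by
        intro hd
        have := Int.le_of_dvd (by exact_mod_cast hj1) hd
        omega)
    rw [h1, h2]; simp
  · simp only [if_neg hjl]
    have hjlZ : (j:ℤ) ≠ l := by exact_mod_cast fun h => hjl (Nat.cast_injective h)
    rcases Int.even_or_odd ((j:ℤ) - l) with he | ho
    · obtain ⟨m, hm⟩ := he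
      have he2 : Even ((j:ℤ) + l) := (Int.even_add).2 ((Int.even_sub).1 ⟨m, hm⟩)
      obtain ⟨m', hm'⟩ := he2
      have hm0 : m ≠ 0 := by
        intro h0; rw [h0] at hm
        exact hjlZ (by omega)
      have h1 : ∑ k ∈ range M, Real.cos ((((j:ℤ)-l : ℤ) : ℝ)*π*k/M) = 0 := by
        have hc : ∀ k ∈ range M, Real.cos ((((j:ℤ)-l : ℤ) : ℝ)*π*k/M)
            = Real.cos (2*π*((m:ℤ) : ℝ)*k/M) := by
          intro k _; congr 1
          rw [hm]; push_cast; ring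
        rw [Finset.sum_congr rfl hc]
        apply sum_cos_even M m hM0
        intro hd
        have habs : (M:ℤ) ≤ |m| := Int.le_of_dvd (abs_pos.mpr hm0) ((dvd_abs _ _).mpr hd)
        have hb : |(j:ℤ) - l| ≤ (M:ℤ) - 1 := abs_le.2 ⟨by omega, by omega⟩
        have h2m : |(j:ℤ) - l| = 2 * |m| := by
          rw [hm, ← two_mul, abs_mul]; norm_num
        have hM2 : (2:ℤ) ≤ M := by exact_mod_cast hM
        linarith
      have h2 : ∑ k ∈ range M, Real.cos ((((j:ℤ)+l : ℤ) : ℝ)*π*k/M) = 0 := by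
        have hc : ∀ k ∈ range M, Real.cos ((((j:ℤ)+l : ℤ) : ℝ)*π*k/M)
            = Real.cos (2*π*((m':ℤ) : ℝ)*k/M) := by
          intro k _; congr 1
          rw [hm']; push_cast; ring
        rw [Finset.sum_congr rfl hc]
        apply sum_cos_even M m' hM0
        intro hd
        have hm'0 : 0 < m' := by omega
        have := Int.le_of_dvd hm'0 hd
        omega
      rw [h1, h2]; ring
    · have ho2 : Odd ((j:ℤ) + l) := by
        rcases Int.even_or_odd ((j:ℤ) + l) with h | h
        · exact absurd ((Int.even_sub).2 ((Int.even_add).1 h)) (by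
            rw [Int.not_even_iff_odd]; simp [ho])
        · exact h
      rw [sum_cos_odd M _ hM0 ho, sum_cos_odd M _ hM0 ho2]
      ring

theorem discretized_sine_orthonormal (M : ℕ) (hM : 2 ≤ M) (j l : ℕ)
    (hj1 : 1 ≤ j) (hj2 : j ≤ M - 1) (hl1 : 1 ≤ l) (hl2 : l ≤ M - 1) :
    (∫ y in (0:ℝ)..1,
        (Real.sqrt 2 * Real.sin (j * π * ((⌊(M : ℝ) * y⌋ : ℝ) / M))) *
          (Real.sqrt 2 * Real.sin (l * π * ((⌊(M : ℝ) * y⌋ : ℝ) / M)))) =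
      if j = l then 1 else 0 := by
  have hM0 : 0 < M := by omega
  have hMR : (0:ℝ) < M := by exact_mod_cast hM0
  set F : ℝ → ℝ := fun y =>
    (Real.sqrt 2 * Real.sin (j * π * ((⌊(M : ℝ) * y⌋ : ℝ) / M))) *
      (Real.sqrt 2 * Real.sin (l * π * ((⌊(M : ℝ) * y⌋ : ℝ) / M))) with hF
  set a : ℕ → ℝ := fun k => k / M with ha
  set c : ℕ → ℝ := fun k =>
    (Real.sqrt 2 * Real.sin (j * π * ((k:ℝ) / M))) *
      (Real.sqrt 2 * Real.sin (l * π * ((k:ℝ) / M))) with hc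
  have hle : ∀ k : ℕ, a k ≤ a (k+1) := by
    intro k
    simp only [ha]
    gcongr
    push_cast; linarith
  -- floor constancy
  have hfloor : ∀ (k : ℕ) (y : ℝ), y ∈ Set.Ioo (a k) (a (k+1)) → ⌊(M:ℝ) * y⌋ = (k:ℤ) := by
    intro k y hy
    obtain ⟨h1, h2⟩ := hy
    rw [Int.floor_eq_iff]
    constructor
    · push_cast
      rw [ha] at h1
      simp only at h1
      calc (k:ℝ) = M * (k / M) := by field_simp
        _ ≤ M * y := by nlinarith
    · push_cast
      rw [ha] at h2
      simp only at h2
      calc (M:ℝ) * y < M * ((k+1) / M) := by push_cast at h2 ⊢; nlinarith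
        _ = k + 1 := by field_simp
  have hae : ∀ k : ℕ, F =ᵐ[volume.restrict (Set.Ioc (a k) (a (k+1)))] fun _ => c k := by
    intro k
    rw [← Measure.restrict_congr_set MeasureTheory.Ioo_ae_eq_Ioc,
       Filter.EventuallyEq, ae_restrict_iff' measurableSet_Ioo]
    filter_upwards with y hy
    have h := hfloor k y hy
    simp only [hF, hc, h]
    push_cast
    ring
  have hint : ∀ k : ℕ, IntervalIntegrable F volume (a k) (a (k+1)) := by
    intro k
    rw [intervalIntegrable_iff_integrableOn_Ioc_of_le (hle k)]
    exact (integrableOn_const measure_Ioc_lt_top.ne).congr (hae k).symm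
  have hval : ∀ k : ℕ, (∫ y in (a k)..(a (k+1)), F y) = c k / M := by
    intro k
    rw [intervalIntegral.integral_of_le (hle k), MeasureTheory.integral_congr_ae (hae k),
      setIntegral_const, measureReal_def, Real.volume_Ioc, smul_eq_mul]
    have hd : a (k+1) - a k = 1 / M := by
      simp only [ha]; push_cast; field_simp; ring
    rw [hd, ENNReal.toReal_ofReal (by positivity)]
    ring
  have hsplit := intervalIntegral.sum_integral_adjacent_intervals (fun k _ => hint k)
    (μ := volume) (a := a) (n := M)
  have ha0 : a 0 = 0 := by simp [ha]
  have haM : a M = 1 := by simp only [ha]; field_simp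
  rw [ha0, haM] at hsplit
  rw [← hsplit]
  have hsum : ∑ k ∈ range M, (∫ y in (a k)..(a (k+1)), F y) = (∑ k ∈ range M,
      2 * Real.sin (j*π*((k:ℝ)/M)) * Real.sin (l*π*((k:ℝ)/M))) / M := by
    rw [Finset.sum_div]
    apply Finset.sum_congr rfl
    intro k _
    rw [hval k]
    congr 1
    simp only [hc]
    rw [show (Real.sqrt 2 * Real.sin (j * π * ((k:ℝ) / M))) *
        (Real.sqrt 2 * Real.sin (l * π * ((k:ℝ) / M))) =
        (Real.sqrt 2 * Real.sqrt 2) * (Real.sin (j * π * ((k:ℝ) / M)) *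
          Real.sin (l * π * ((k:ℝ) / M))) by ring,
      Real.mul_self_sqrt (by norm_num)]
    ring
  rw [hsum, sum_sin_orth M j l hM hj1 hj2 hl1 hl2]
  by_cases hjl : j = l <;> simp [hjl] <;> omega
end

section
/- For every α ∈ (1/2, 5/2) there exists a constant C = C(α, T) such that for all M ≥ 2, all x ∈ [0,1], and all 0 < s < t ≤ T, Σ_{j=1}^{M−1} exp(−2 j² π² c_j^M s) (1 − exp(−j² π² c_j^M (t−s)))² ≤ C s^{−α} (t−s)^{α − 1/2}, where c_j^M = sin²(jπ/(2M))/(jπ/(2M))² ∈ [4/π², 1]. -/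
open Real

/-- The correction factor in the eigenvalues of the discrete Dirichlet Laplacian. -/
noncomputable def cjM (j M : ℕ) : ℝ :=
  Real.sin (j * π / (2 * M)) ^ 2 / (j * π / (2 * M)) ^ 2

open Finset

set_option maxHeartbeats 1000000

private lemma exp_le_rpow27 {α : ℝ} (hα0 : 0 < α) (hα3 : α ≤ 3) {x : ℝ} (hx : 0 < x) :
    Real.exp (-x) ≤ 27 * x ^ (-α) := by
  have hxα : (0:ℝ) < x ^ α := Real.rpow_pos_of_pos hx α
  have hex : (0:ℝ) < Real.exp x := Real.exp_pos x
  have key : x ^ α ≤ 27 * Real.exp x := by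
    rcases le_or_gt x 1 with h | h
    · have h1 : x ^ α ≤ 1 := Real.rpow_le_one hx.le h hα0.le
      have h2 : (1:ℝ) ≤ Real.exp x := by
        have := Real.add_one_le_exp x
        linarith
      nlinarith
    · have h3 : x ^ α ≤ x ^ (3:ℝ) := Real.rpow_le_rpow_of_exponent_le h.le hα3
      have h4 : x ^ (3:ℝ) = x ^ (3:ℕ) := by
        rw [← Real.rpow_natCast x 3]; norm_num
      have h5 : x / 3 + 1 ≤ Real.exp (x / 3) := by
        have := Real.add_one_le_exp (x / 3); linarith
      have h6 : (x / 3) ^ (3:ℕ) ≤ (Real.exp (x / 3)) ^ (3:ℕ) := by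
        apply pow_le_pow_left₀ (by positivity)
        linarith
      have h7 : (Real.exp (x / 3)) ^ (3:ℕ) = Real.exp x := by
        rw [← Real.exp_nat_mul]; ring_nf
      rw [h7] at h6
      calc x ^ α ≤ x ^ (3:ℝ) := h3
        _ = x ^ (3:ℕ) := h4
        _ ≤ 27 * rexp x := by nlinarith
  have : Real.exp (-x) * x ^ α ≤ 27 := by
    rw [Real.exp_neg]
    rw [inv_mul_le_iff₀ hex] at *
    nlinarith
  rw [Real.rpow_neg hx.le]
  calc Real.exp (-x) = (Real.exp (-x) * x ^ α) * (x ^ α)⁻¹ := by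
        field_simp
    _ ≤ 27 * (x ^ α)⁻¹ := by
        apply mul_le_mul_of_nonneg_right this (by positivity)

private lemma rpow_mvt (q : ℝ) {a : ℝ} (ha : 1 ≤ a) :
    ∃ c, a < c ∧ c < a + 1 ∧ (a + 1) ^ q - a ^ q = q * c ^ (q - 1) := by
  have hab : a < a + 1 := by linarith
  have hderiv : ∀ x ∈ Set.Ioo a (a + 1),
      HasDerivAt (fun y : ℝ => y ^ q) (q * x ^ (q - 1)) x := by
    intro x hx
    have hx0 : x ≠ 0 := by
      have : 1 < x := lt_of_le_of_lt ha hx.1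
      linarith
    exact Real.hasDerivAt_rpow_const (Or.inl hx0)
  have hcont : ContinuousOn (fun y : ℝ => y ^ q) (Set.Icc a (a + 1)) := by
    intro x hx
    have hx0 : x ≠ 0 := by
      have : 1 ≤ x := le_trans ha hx.1
      linarith
    exact (Real.hasDerivAt_rpow_const (p := q) (Or.inl hx0)).continuousAt.continuousWithinAt
  obtain ⟨c, hc, heq⟩ := exists_hasDerivAt_eq_slope (fun y : ℝ => y ^ q)
    (fun x => q * x ^ (q - 1)) hab hcont hderiv
  refine ⟨c, hc.1, hc.2, ?_⟩
  rw [heq]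
  simp

private lemma rpow_head_step {q : ℝ} (hq0 : 0 < q) (hq1 : q ≤ 1) {a : ℝ} (ha : 1 ≤ a) :
    q * (a + 1) ^ (q - 1) ≤ (a + 1) ^ q - a ^ q := by
  obtain ⟨c, hac, hca, heq⟩ := rpow_mvt q ha
  rw [heq]
  have hc0 : (0:ℝ) < c := by linarith
  have : (a + 1) ^ (q - 1) ≤ c ^ (q - 1) :=
    Real.rpow_le_rpow_of_nonpos hc0 hca.le (by linarith)
  nlinarith

private lemma rpow_tail_step {q : ℝ} (hq0 : q < 0) {a : ℝ} (ha : 1 ≤ a) :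
    (-q) * (a + 1) ^ (q - 1) ≤ a ^ q - (a + 1) ^ q := by
  obtain ⟨c, hac, hca, heq⟩ := rpow_mvt q ha
  have h2 : a ^ q - (a + 1) ^ q = (-q) * c ^ (q - 1) := by linarith [heq]
  rw [h2]
  have hc0 : (0:ℝ) < c := by linarith
  have : (a + 1) ^ (q - 1) ≤ c ^ (q - 1) :=
    Real.rpow_le_rpow_of_nonpos hc0 hca.le (by linarith)
  nlinarith

private lemma tail_sum {α : ℝ} (hα : 1 / 2 < α) {N : ℕ} (hN : 1 ≤ N) (m : ℕ) :
    ∑ j ∈ Finset.Icc (N + 1) m, ((j : ℝ)) ^ (-(2 * α)) ≤ (N : ℝ) ^ (1 - 2 * α) / (2 * α - 1) := by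
  have hd : (0:ℝ) < 2 * α - 1 := by linarith
  rcases le_or_gt (N + 1) m with hm | hm
  · -- induction from N to m of the sharp bound
    have sharp : ∀ m : ℕ, N ≤ m →
        ∑ j ∈ Finset.Icc (N + 1) m, ((j : ℝ)) ^ (-(2 * α))
          ≤ ((N : ℝ) ^ (1 - 2 * α) - (m : ℝ) ^ (1 - 2 * α)) / (2 * α - 1) := by
      intro m hm
      induction m, hm using Nat.le_induction with
      | base =>
        rw [Finset.Icc_eq_empty (by omega)]
        simp
      | succ m hm ih =>
        rw [Finset.sum_Icc_succ_top (by omega)]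
        have hma : (1:ℝ) ≤ (m:ℝ) := by exact_mod_cast le_trans hN hm
        have hstep := rpow_tail_step (q := 1 - 2 * α) (by linarith) hma
        have hcast : ((m:ℝ) + 1) = ((m + 1 : ℕ) : ℝ) := by push_cast; ring
        have hexp : (1 - 2 * α) - 1 = -(2 * α) := by ring
        rw [hcast, hexp] at hstep
        have : ((m + 1 : ℕ) : ℝ) ^ (-(2 * α))
            ≤ ((m : ℝ) ^ (1 - 2 * α) - ((m + 1 : ℕ) : ℝ) ^ (1 - 2 * α)) / (2 * α - 1) := by
          rw [le_div_iff₀ hd]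
          nlinarith
        calc ∑ j ∈ Finset.Icc (N + 1) m, ((j : ℝ)) ^ (-(2 * α)) + ((m + 1 : ℕ) : ℝ) ^ (-(2 * α))
            ≤ ((N : ℝ) ^ (1 - 2 * α) - (m : ℝ) ^ (1 - 2 * α)) / (2 * α - 1)
              + ((m : ℝ) ^ (1 - 2 * α) - ((m + 1 : ℕ) : ℝ) ^ (1 - 2 * α)) / (2 * α - 1) := by
              exact add_le_add ih this
          _ = ((N : ℝ) ^ (1 - 2 * α) - ((m + 1 : ℕ) : ℝ) ^ (1 - 2 * α)) / (2 * α - 1) := by ring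
    have h := sharp m (by omega)
    have hm0 : (0:ℝ) ≤ (m : ℝ) ^ (1 - 2 * α) := Real.rpow_nonneg (by positivity) _
    calc ∑ j ∈ Finset.Icc (N + 1) m, ((j : ℝ)) ^ (-(2 * α))
        ≤ ((N : ℝ) ^ (1 - 2 * α) - (m : ℝ) ^ (1 - 2 * α)) / (2 * α - 1) := h
      _ ≤ (N : ℝ) ^ (1 - 2 * α) / (2 * α - 1) := by
          gcongr
          linarith
  · rw [Finset.Icc_eq_empty (by omega)]
    simp
    positivity

private lemma head_sum {α : ℝ} (hα1 : 1 / 2 < α) (hα2 : α < 5 / 2) {N : ℕ} (hN : 1 ≤ N) :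
    ∑ j ∈ Finset.Icc 1 N, ((j : ℝ)) ^ (4 - 2 * α)
      ≤ (1 + 1 / (5 - 2 * α)) * (N : ℝ) ^ (5 - 2 * α) := by
  have hd2 : (0:ℝ) < 5 - 2 * α := by linarith
  have hN1 : (1:ℝ) ≤ (N:ℝ) := by exact_mod_cast hN
  have hNq : (1:ℝ) ≤ (N : ℝ) ^ (5 - 2 * α) := Real.one_le_rpow hN1 (by linarith)
  rcases le_or_gt α 2 with hc | hc
  · -- trivial bound: each term ≤ N^(4-2α)
    have : ∑ j ∈ Finset.Icc 1 N, ((j : ℝ)) ^ (4 - 2 * α)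
        ≤ ∑ _j ∈ Finset.Icc 1 N, ((N : ℝ)) ^ (4 - 2 * α) := by
      apply Finset.sum_le_sum
      intro j hj
      simp only [Finset.mem_Icc] at hj
      exact Real.rpow_le_rpow (by positivity) (by exact_mod_cast hj.2) (by linarith)
    rw [Finset.sum_const, Nat.card_Icc] at this
    have hcard : ((N + 1 - 1 : ℕ) : ℝ) = (N : ℝ) := by norm_num
    have heq : (N : ℝ) * (N : ℝ) ^ (4 - 2 * α) = (N : ℝ) ^ (5 - 2 * α) := by
      nth_rewrite 1 [← Real.rpow_one (N:ℝ)]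
      rw [← Real.rpow_add (by linarith)]
      ring_nf
    calc ∑ j ∈ Finset.Icc 1 N, ((j : ℝ)) ^ (4 - 2 * α)
        ≤ (N + 1 - 1 : ℕ) • ((N : ℝ)) ^ (4 - 2 * α) := this
      _ = (N : ℝ) * (N : ℝ) ^ (4 - 2 * α) := by rw [nsmul_eq_mul, hcard]
      _ = (N : ℝ) ^ (5 - 2 * α) := heq
      _ ≤ (1 + 1 / (5 - 2 * α)) * (N : ℝ) ^ (5 - 2 * α) := by
          nth_rewrite 1 [← one_mul ((N : ℝ) ^ (5 - 2 * α))]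
          apply mul_le_mul_of_nonneg_right _ (by positivity)
          have : (0:ℝ) < 1 / (5 - 2 * α) := by positivity
          linarith
  · -- α ∈ (2, 5/2): q := 5 - 2α ∈ (0,1); telescoping on Icc 2 N
    have hq0 : (0:ℝ) < 5 - 2 * α := hd2
    have hq1 : (5 - 2 * α : ℝ) ≤ 1 := by linarith
    have sharp : ∀ N : ℕ, 1 ≤ N →
        ∑ j ∈ Finset.Icc 2 N, ((j : ℝ)) ^ (4 - 2 * α)
          ≤ ((N : ℝ) ^ (5 - 2 * α) - 1) / (5 - 2 * α) := by
      intro N hN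
      induction N, hN using Nat.le_induction with
      | base =>
        rw [Finset.Icc_eq_empty (by omega)]
        simp
      | succ n hn ih =>
        rw [Finset.sum_Icc_succ_top (by omega)]
        have hna : (1:ℝ) ≤ (n:ℝ) := by exact_mod_cast hn
        have hstep := rpow_head_step hq0 hq1 hna
        have hcast : ((n:ℝ) + 1) = ((n + 1 : ℕ) : ℝ) := by push_cast; ring
        have hexp : (5 - 2 * α) - 1 = 4 - 2 * α := by ring
        rw [hcast, hexp] at hstep
        have : ((n + 1 : ℕ) : ℝ) ^ (4 - 2 * α)
            ≤ (((n + 1 : ℕ) : ℝ) ^ (5 - 2 * α) - (n : ℝ) ^ (5 - 2 * α)) / (5 - 2 * α) := by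
          rw [le_div_iff₀ hq0]
          nlinarith
        calc ∑ j ∈ Finset.Icc 2 n, ((j : ℝ)) ^ (4 - 2 * α) + ((n + 1 : ℕ) : ℝ) ^ (4 - 2 * α)
            ≤ ((n : ℝ) ^ (5 - 2 * α) - 1) / (5 - 2 * α)
              + (((n + 1 : ℕ) : ℝ) ^ (5 - 2 * α) - (n : ℝ) ^ (5 - 2 * α)) / (5 - 2 * α) :=
              add_le_add ih this
          _ = (((n + 1 : ℕ) : ℝ) ^ (5 - 2 * α) - 1) / (5 - 2 * α) := by ring
    have hsplit : Finset.Icc 1 N = insert 1 (Finset.Icc 2 N) := by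
      ext j; simp only [Finset.mem_Icc, Finset.mem_insert]; omega
    have h1 : (1:ℕ) ∉ Finset.Icc 2 N := by simp
    rw [hsplit, Finset.sum_insert h1]
    have h2 := sharp N hN
    have h3 : ((1:ℕ):ℝ) ^ (4 - 2 * α) = 1 := by norm_num
    rw [h3]
    have h4 : ((N : ℝ) ^ (5 - 2 * α) - 1) / (5 - 2 * α) ≤ (N : ℝ) ^ (5 - 2 * α) / (5 - 2 * α) := by
      gcongr
      linarith
    calc 1 + ∑ j ∈ Finset.Icc 2 N, ((j : ℝ)) ^ (4 - 2 * α)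
        ≤ 1 + (N : ℝ) ^ (5 - 2 * α) / (5 - 2 * α) := by linarith
      _ ≤ (1 + 1 / (5 - 2 * α)) * (N : ℝ) ^ (5 - 2 * α) := by
          rw [div_eq_mul_inv, one_div]
          nlinarith [inv_pos.mpr hq0]

private noncomputable def Cα (α : ℝ) : ℝ :=
  π ^ 4 * (1 + 1 / (5 - 2 * α)) + 16 / (2 * α - 1) + (1 + 1 / (2 * α - 1))

private lemma core_sum {α : ℝ} (hα1 : 1 / 2 < α) (hα2 : α < 5 / 2) {τ : ℝ} (hτ : 0 < τ)
    (m : ℕ) :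
    ∑ j ∈ Finset.Icc 1 m, ((j : ℝ)) ^ (-(2 * α)) * min 1 ((π ^ 2 * (j : ℝ) ^ 2 * τ) ^ 2)
      ≤ Cα α * τ ^ (α - 1 / 2) := by
  have hd1 : (0:ℝ) < 2 * α - 1 := by linarith
  have hd2 : (0:ℝ) < 5 - 2 * α := by linarith
  have hπ : (1:ℝ) ≤ π ^ 4 := by
    have h1 : (3:ℝ) ≤ π := Real.pi_gt_three.le
    have h2 : (9:ℝ) ≤ π ^ 2 := by nlinarith
    nlinarith
  have hCα : (1:ℝ) + 1 / (2 * α - 1) ≤ Cα α := by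
    unfold Cα
    have h1 : (0:ℝ) < 1 / (5 - 2 * α) := by positivity
    have h2 : (0:ℝ) < 16 / (2 * α - 1) := by positivity
    nlinarith
  have hterm_nonneg : ∀ j : ℕ, (0:ℝ) ≤ ((j : ℝ)) ^ (-(2 * α)) *
      min 1 ((π ^ 2 * (j : ℝ) ^ 2 * τ) ^ 2) := by
    intro j
    exact mul_nonneg (Real.rpow_nonneg (by positivity) _)
      (le_min (by norm_num) (sq_nonneg _))
  have hrpos : (0:ℝ) ≤ τ ^ (α - 1 / 2) := Real.rpow_nonneg hτ.le _
  have hCpos : (0:ℝ) < Cα α := by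
    have h1 : (0:ℝ) < 1 / (2 * α - 1) := by positivity
    linarith
  rcases le_or_gt 1 τ with hτ1 | hτ1
  · -- τ ≥ 1 : crude bound
    have hτr : (1:ℝ) ≤ τ ^ (α - 1 / 2) := Real.one_le_rpow hτ1 (by linarith)
    have hb1 : ∑ j ∈ Finset.Icc 1 m, ((j : ℝ)) ^ (-(2 * α)) * min 1 ((π ^ 2 * (j : ℝ) ^ 2 * τ) ^ 2)
        ≤ ∑ j ∈ Finset.Icc 1 m, ((j : ℝ)) ^ (-(2 * α)) := by
      apply Finset.sum_le_sum
      intro j hj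
      exact mul_le_of_le_one_right (Real.rpow_nonneg (by positivity) _) (min_le_left _ _)
    have hb2 : ∑ j ∈ Finset.Icc 1 m, ((j : ℝ)) ^ (-(2 * α)) ≤ 1 + 1 / (2 * α - 1) := by
      rcases Nat.lt_or_ge m 1 with hm | hm
      · interval_cases m
        simp
        positivity
      · have hsplit : Finset.Icc 1 m = insert 1 (Finset.Icc 2 m) := by
          ext j; simp only [Finset.mem_Icc, Finset.mem_insert]; omega
        rw [hsplit, Finset.sum_insert (by simp)]
        have ht := tail_sum hα1 (le_refl 1) m
        have h1 : ((1:ℕ):ℝ) ^ (-(2*α)) = 1 := by norm_num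
        have h2 : ((1:ℕ):ℝ) ^ (1 - 2*α) = 1 := by norm_num
        rw [h2] at ht
        rw [h1]
        linarith
    calc ∑ j ∈ Finset.Icc 1 m, ((j : ℝ)) ^ (-(2 * α)) * min 1 ((π ^ 2 * (j : ℝ) ^ 2 * τ) ^ 2)
        ≤ 1 + 1 / (2 * α - 1) := le_trans hb1 hb2
      _ ≤ Cα α := hCα
      _ = Cα α * 1 := by ring
      _ ≤ Cα α * τ ^ (α - 1 / 2) := by
          exact mul_le_mul_of_nonneg_left hτr hCpos.le
  · -- τ < 1
    set x := τ ^ (-(1/2) : ℝ) with hxdef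
    have hx1 : 1 < x := by
      rw [hxdef]
      rw [Real.one_lt_rpow_iff_of_pos hτ]
      right
      constructor
      · exact hτ1
      · norm_num
    have hx0 : (0:ℝ) < x := by linarith
    set N := ⌊x⌋₊ with hNdef
    have hN1 : 1 ≤ N := by
      rw [hNdef]
      exact Nat.floor_pos.mpr hx1.le
    have hNx : (N:ℝ) ≤ x := Nat.floor_le hx0.le
    have hxN : x < (N:ℝ) + 1 := Nat.lt_floor_add_one x
    have hN2 : x / 2 ≤ (N:ℝ) := by
      rcases le_or_gt x 2 with h | h
      · have : (1:ℝ) ≤ (N:ℝ) := by exact_mod_cast hN1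
        linarith
      · have := Nat.sub_one_lt_floor x
        push_cast at this ⊢
        linarith
    have e1 : τ ^ (2:ℝ) * x ^ (5 - 2 * α) = τ ^ (α - 1 / 2) := by
      rw [hxdef, ← Real.rpow_mul hτ.le, ← Real.rpow_add hτ,
        show (2:ℝ) + -(1/2) * (5 - 2 * α) = α - 1/2 by ring]
    have e2 : x ^ (1 - 2 * α) = τ ^ (α - 1 / 2) := by
      rw [hxdef, ← Real.rpow_mul hτ.le, show (-(1/2)) * (1 - 2 * α) = α - 1/2 by ring]
    rw [← Finset.sum_filter_add_sum_filter_not (Finset.Icc 1 m) (fun j => j ≤ N)]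
    have hA : ∑ j ∈ (Finset.Icc 1 m).filter (fun j => j ≤ N),
        ((j : ℝ)) ^ (-(2 * α)) * min 1 ((π ^ 2 * (j : ℝ) ^ 2 * τ) ^ 2)
        ≤ π ^ 4 * (1 + 1 / (5 - 2 * α)) * τ ^ (α - 1 / 2) := by
      have step1 : ∀ j ∈ (Finset.Icc 1 m).filter (fun j => j ≤ N),
          ((j : ℝ)) ^ (-(2 * α)) * min 1 ((π ^ 2 * (j : ℝ) ^ 2 * τ) ^ 2)
            ≤ π ^ 4 * τ ^ (2:ℝ) * ((j : ℝ)) ^ (4 - 2 * α) := by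
        intro j hj
        simp only [Finset.mem_filter, Finset.mem_Icc] at hj
        have hj1 : (1:ℝ) ≤ (j:ℝ) := by exact_mod_cast hj.1.1
        have hj0 : (0:ℝ) < (j:ℝ) := by linarith
        have hmin : min 1 ((π ^ 2 * (j:ℝ) ^ 2 * τ) ^ 2) ≤ (π ^ 2 * (j:ℝ) ^ 2 * τ) ^ 2 :=
          min_le_right _ _
        have h4 : (j:ℝ) ^ (-(2 * α)) * (j:ℝ) ^ (((4:ℕ)):ℝ) = (j:ℝ) ^ (4 - 2 * α) := by
          rw [← Real.rpow_add hj0, show -(2 * α) + (((4:ℕ)):ℝ) = 4 - 2 * α by push_cast; ring]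
        have h5 : (j:ℝ) ^ (((4:ℕ)):ℝ) = ((j:ℝ) ^ 2) ^ 2 := by
          rw [Real.rpow_natCast]; ring
        have h6 : τ ^ (2:ℝ) = τ ^ (2:ℕ) := by
          rw [← Real.rpow_natCast τ 2]; norm_num
        have hrw : (j:ℝ) ^ (-(2 * α)) * (π ^ 2 * (j:ℝ) ^ 2 * τ) ^ 2
            = π ^ 4 * τ ^ (2:ℝ) * (j:ℝ) ^ (4 - 2 * α) := by
          calc (j:ℝ) ^ (-(2 * α)) * (π ^ 2 * (j:ℝ) ^ 2 * τ) ^ 2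
              = ((j:ℝ) ^ (-(2 * α)) * ((j:ℝ) ^ 2) ^ 2) * (π ^ 4 * τ ^ (2:ℕ)) := by ring
            _ = ((j:ℝ) ^ (-(2 * α)) * (j:ℝ) ^ (((4:ℕ)):ℝ)) * (π ^ 4 * τ ^ (2:ℕ)) := by rw [h5]
            _ = (j:ℝ) ^ (4 - 2 * α) * (π ^ 4 * τ ^ (2:ℕ)) := by rw [h4]
            _ = π ^ 4 * τ ^ (2:ℝ) * (j:ℝ) ^ (4 - 2 * α) := by rw [h6]; ring
        calc ((j : ℝ)) ^ (-(2 * α)) * min 1 ((π ^ 2 * (j : ℝ) ^ 2 * τ) ^ 2)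
            ≤ ((j : ℝ)) ^ (-(2 * α)) * (π ^ 2 * (j:ℝ) ^ 2 * τ) ^ 2 :=
              mul_le_mul_of_nonneg_left hmin (Real.rpow_nonneg hj0.le _)
          _ = π ^ 4 * τ ^ (2:ℝ) * ((j : ℝ)) ^ (4 - 2 * α) := hrw
      have hsub : (Finset.Icc 1 m).filter (fun j => j ≤ N) ⊆ Finset.Icc 1 N := by
        intro j hj
        simp only [Finset.mem_filter, Finset.mem_Icc] at hj ⊢
        omega
      have hτ2 : (0:ℝ) ≤ π ^ 4 * τ ^ (2:ℝ) := by positivity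
      calc ∑ j ∈ (Finset.Icc 1 m).filter (fun j => j ≤ N),
            ((j : ℝ)) ^ (-(2 * α)) * min 1 ((π ^ 2 * (j : ℝ) ^ 2 * τ) ^ 2)
          ≤ ∑ j ∈ (Finset.Icc 1 m).filter (fun j => j ≤ N),
            π ^ 4 * τ ^ (2:ℝ) * ((j : ℝ)) ^ (4 - 2 * α) := Finset.sum_le_sum step1
        _ ≤ ∑ j ∈ Finset.Icc 1 N, π ^ 4 * τ ^ (2:ℝ) * ((j : ℝ)) ^ (4 - 2 * α) := by
            apply Finset.sum_le_sum_of_subset_of_nonneg hsub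
            intro j _ _
            exact mul_nonneg hτ2 (Real.rpow_nonneg (by positivity) _)
        _ = π ^ 4 * τ ^ (2:ℝ) * ∑ j ∈ Finset.Icc 1 N, ((j : ℝ)) ^ (4 - 2 * α) := by
            rw [Finset.mul_sum]
        _ ≤ π ^ 4 * τ ^ (2:ℝ) * ((1 + 1 / (5 - 2 * α)) * (N : ℝ) ^ (5 - 2 * α)) := by
            exact mul_le_mul_of_nonneg_left (head_sum hα1 hα2 hN1) hτ2
        _ ≤ π ^ 4 * τ ^ (2:ℝ) * ((1 + 1 / (5 - 2 * α)) * x ^ (5 - 2 * α)) := by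
            apply mul_le_mul_of_nonneg_left _ hτ2
            apply mul_le_mul_of_nonneg_left _ (by positivity)
            exact Real.rpow_le_rpow (by positivity) hNx (by linarith)
        _ = π ^ 4 * (1 + 1 / (5 - 2 * α)) * (τ ^ (2:ℝ) * x ^ (5 - 2 * α)) := by ring
        _ = π ^ 4 * (1 + 1 / (5 - 2 * α)) * τ ^ (α - 1 / 2) := by rw [e1]
    have hB : ∑ j ∈ (Finset.Icc 1 m).filter (fun j => ¬ j ≤ N),
        ((j : ℝ)) ^ (-(2 * α)) * min 1 ((π ^ 2 * (j : ℝ) ^ 2 * τ) ^ 2)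
        ≤ 16 / (2 * α - 1) * τ ^ (α - 1 / 2) := by
      have hsub : (Finset.Icc 1 m).filter (fun j => ¬ j ≤ N) ⊆ Finset.Icc (N + 1) m := by
        intro j hj
        simp only [Finset.mem_filter, Finset.mem_Icc] at hj ⊢
        omega
      have h216 : (2:ℝ) ^ (2 * α - 1) ≤ 16 := by
        calc (2:ℝ) ^ (2 * α - 1) ≤ (2:ℝ) ^ (((4:ℕ)):ℝ) :=
              Real.rpow_le_rpow_of_exponent_le one_le_two (by push_cast; linarith)
          _ = 16 := by rw [Real.rpow_natCast]; norm_num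
      have hxhalf : (0:ℝ) < x / 2 := by linarith
      have hkey : (N:ℝ) ^ (1 - 2 * α) ≤ 16 * x ^ (1 - 2 * α) := by
        have h1 : (N:ℝ) ^ (1 - 2 * α) ≤ (x / 2) ^ (1 - 2 * α) :=
          Real.rpow_le_rpow_of_nonpos hxhalf hN2 (by linarith)
        have h2 : (x / 2) ^ (1 - 2 * α) = x ^ (1 - 2 * α) / (2:ℝ) ^ (1 - 2 * α) :=
          Real.div_rpow hx0.le (by norm_num) _
        have h3 : x ^ (1 - 2 * α) / (2:ℝ) ^ (1 - 2 * α)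
            = x ^ (1 - 2 * α) * (2:ℝ) ^ (2 * α - 1) := by
          rw [div_eq_mul_inv, ← Real.rpow_neg (by norm_num : (0:ℝ) ≤ 2),
            show -(1 - 2 * α) = 2 * α - 1 by ring]
        have hx2 : (0:ℝ) ≤ x ^ (1 - 2 * α) := Real.rpow_nonneg hx0.le _
        calc (N:ℝ) ^ (1 - 2 * α) ≤ (x / 2) ^ (1 - 2 * α) := h1
          _ = x ^ (1 - 2 * α) * (2:ℝ) ^ (2 * α - 1) := by rw [h2, h3]
          _ ≤ x ^ (1 - 2 * α) * 16 := mul_le_mul_of_nonneg_left h216 hx2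
          _ = 16 * x ^ (1 - 2 * α) := by ring
      calc ∑ j ∈ (Finset.Icc 1 m).filter (fun j => ¬ j ≤ N),
            ((j : ℝ)) ^ (-(2 * α)) * min 1 ((π ^ 2 * (j : ℝ) ^ 2 * τ) ^ 2)
          ≤ ∑ j ∈ (Finset.Icc 1 m).filter (fun j => ¬ j ≤ N), ((j : ℝ)) ^ (-(2 * α)) := by
            apply Finset.sum_le_sum
            intro j hj
            exact mul_le_of_le_one_right (Real.rpow_nonneg (by positivity) _) (min_le_left _ _)
        _ ≤ ∑ j ∈ Finset.Icc (N + 1) m, ((j : ℝ)) ^ (-(2 * α)) := by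
            apply Finset.sum_le_sum_of_subset_of_nonneg hsub
            intro j _ _
            exact Real.rpow_nonneg (by positivity) _
        _ ≤ (N : ℝ) ^ (1 - 2 * α) / (2 * α - 1) := tail_sum hα1 hN1 m
        _ ≤ 16 * x ^ (1 - 2 * α) / (2 * α - 1) := by
            apply div_le_div_of_nonneg_right hkey hd1.le
        _ = 16 / (2 * α - 1) * τ ^ (α - 1 / 2) := by rw [e2]; ring
    have hfinal : π ^ 4 * (1 + 1 / (5 - 2 * α)) + 16 / (2 * α - 1) ≤ Cα α := by
      unfold Cα
      have h1 : (0:ℝ) < 1 / (2 * α - 1) := by positivity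
      linarith
    have hmul : (π ^ 4 * (1 + 1 / (5 - 2 * α)) + 16 / (2 * α - 1)) * τ ^ (α - 1 / 2)
        ≤ Cα α * τ ^ (α - 1 / 2) := mul_le_mul_of_nonneg_right hfinal hrpos
    have heq : π ^ 4 * (1 + 1 / (5 - 2 * α)) * τ ^ (α - 1 / 2)
        + 16 / (2 * α - 1) * τ ^ (α - 1 / 2)
        = (π ^ 4 * (1 + 1 / (5 - 2 * α)) + 16 / (2 * α - 1)) * τ ^ (α - 1 / 2) := by ring
    linarith [add_le_add hA hB]

private lemma Cα_pos {α : ℝ} (hα1 : 1 / 2 < α) (hα2 : α < 5 / 2) : 0 < Cα α := by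
  unfold Cα
  have hd1 : (0:ℝ) < 2 * α - 1 := by linarith
  have hd2 : (0:ℝ) < 5 - 2 * α := by linarith
  have h1 : (0:ℝ) < 1 / (2 * α - 1) := by positivity
  have h2 : (0:ℝ) < 1 / (5 - 2 * α) := by positivity
  have h3 : (0:ℝ) < 16 / (2 * α - 1) := by positivity
  have h4 : (0:ℝ) < π ^ 4 := by positivity
  nlinarith

private lemma cjM_bounds {j M : ℕ} (hj : 1 ≤ j) (hjM : j ≤ M) :
    4 ≤ π ^ 2 * cjM j M ∧ cjM j M ≤ 1 := by
  have hjr : (1:ℝ) ≤ (j:ℝ) := by exact_mod_cast hj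
  have hMr : (j:ℝ) ≤ (M:ℝ) := by exact_mod_cast hjM
  have hM0 : (0:ℝ) < (M:ℝ) := by linarith
  have hθ0 : (0:ℝ) < (j:ℝ) * π / (2 * (M:ℝ)) := by
    apply div_pos (by positivity) (by positivity)
  set θ := (j:ℝ) * π / (2 * (M:ℝ)) with hθdef
  have hθ2 : θ ≤ π / 2 := by
    rw [hθdef, div_le_div_iff₀ (by positivity) (by norm_num)]
    nlinarith [Real.pi_pos]
  have hsin1 : Real.sin θ ≤ θ := Real.sin_le hθ0.le
  have hsin2 : 2 / π * θ ≤ Real.sin θ := Real.mul_le_sin hθ0.le hθ2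
  have hsin0 : (0:ℝ) ≤ Real.sin θ := le_trans (by positivity) hsin2
  have hcdef : cjM j M = Real.sin θ ^ 2 / θ ^ 2 := by
    unfold cjM
    rw [hθdef]
  constructor
  · rw [hcdef, ← mul_div_assoc, le_div_iff₀ (by positivity)]
    have h2 : (2 / π * θ) ^ 2 ≤ Real.sin θ ^ 2 := by
      apply pow_le_pow_left₀ (by positivity) hsin2
    have h3 : π ^ 2 * (2 / π * θ) ^ 2 = 4 * θ ^ 2 := by
      field_simp
      ring
    nlinarith [sq_nonneg π, Real.pi_pos]
  · rw [hcdef, div_le_one (by positivity)]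
    apply pow_le_pow_left₀ hsin0 hsin1

theorem discrete_kernel_time_increment (α T : ℝ) (hα1 : 1 / 2 < α) (hα2 : α < 5 / 2)
    (hT : 0 < T) :
    ∃ C > 0, ∀ M : ℕ, 2 ≤ M → ∀ x : ℝ, x ∈ Set.Icc (0:ℝ) 1 → ∀ s t : ℝ,
      0 < s → s < t → t ≤ T →
      ∑ j ∈ Finset.Icc 1 (M - 1),
          Real.exp (-2 * (j : ℝ) ^ 2 * π ^ 2 * cjM j M * s) *
            (1 - Real.exp (-(j : ℝ) ^ 2 * π ^ 2 * cjM j M * (t - s))) ^ 2 ≤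
        C * s ^ (-α) * (t - s) ^ (α - 1 / 2) := by
  have hα0 : 0 < α := by linarith
  have hα3 : α ≤ 3 := by linarith
  refine ⟨27 * (8:ℝ) ^ (-α) * Cα α, ?_, ?_⟩
  · have h8 : (0:ℝ) < (8:ℝ) ^ (-α) := Real.rpow_pos_of_pos (by norm_num) _
    have := Cα_pos hα1 hα2
    positivity
  intro M hM x hx s t hs hst htT
  have hτ : 0 < t - s := by linarith
  have key : ∀ j ∈ Finset.Icc 1 (M - 1),
      Real.exp (-2 * (j : ℝ) ^ 2 * π ^ 2 * cjM j M * s) *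
          (1 - Real.exp (-(j : ℝ) ^ 2 * π ^ 2 * cjM j M * (t - s))) ^ 2
        ≤ 27 * (8:ℝ) ^ (-α) * s ^ (-α) *
            (((j : ℝ)) ^ (-(2 * α)) * min 1 ((π ^ 2 * (j : ℝ) ^ 2 * (t - s)) ^ 2)) := by
    intro j hj
    simp only [Finset.mem_Icc] at hj
    have hj1 : 1 ≤ j := hj.1
    have hjM : j ≤ M := by omega
    have hjr : (1:ℝ) ≤ (j:ℝ) := by exact_mod_cast hj1
    have hj0 : (0:ℝ) < (j:ℝ) := by linarith
    obtain ⟨hc2, hc1⟩ := cjM_bounds hj1 hjM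
    have hc0 : (0:ℝ) ≤ cjM j M := by nlinarith [Real.pi_pos, sq_nonneg π]
    -- exponential factor
    have hexp1 : Real.exp (-2 * (j : ℝ) ^ 2 * π ^ 2 * cjM j M * s)
        ≤ Real.exp (-(8 * (j:ℝ) ^ 2 * s)) := by
      apply Real.exp_le_exp.mpr
      have h := mul_nonneg (by positivity : (0:ℝ) ≤ 2 * (j:ℝ) ^ 2 * s)
        (sub_nonneg.mpr hc2)
      nlinarith
    have hexp2 : Real.exp (-(8 * (j:ℝ) ^ 2 * s)) ≤ 27 * (8 * (j:ℝ) ^ 2 * s) ^ (-α) :=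
      exp_le_rpow27 hα0 hα3 (by positivity)
    have hsplit : (8 * (j:ℝ) ^ 2 * s) ^ (-α)
        = (8:ℝ) ^ (-α) * ((j:ℝ) ^ 2) ^ (-α) * s ^ (-α) := by
      rw [Real.mul_rpow (by positivity) hs.le, Real.mul_rpow (by norm_num) (by positivity)]
    have hjj : ((j:ℝ) ^ 2) ^ (-α) = (j:ℝ) ^ (-(2 * α)) := by
      rw [← Real.rpow_natCast (j:ℝ) 2, ← Real.rpow_mul hj0.le,
        show ((2:ℕ):ℝ) * (-α) = -(2 * α) by push_cast; ring]
    -- square factor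
    set y := (j:ℝ) ^ 2 * π ^ 2 * cjM j M * (t - s) with hydef
    have harg : -(j : ℝ) ^ 2 * π ^ 2 * cjM j M * (t - s) = -y := by rw [hydef]; ring
    have hy0 : (0:ℝ) ≤ y := by rw [hydef]; positivity
    have h1e : 1 - Real.exp (-y) ≤ 1 := by linarith [Real.exp_pos (-y)]
    have h2e : 1 - Real.exp (-y) ≤ y := by linarith [Real.add_one_le_exp (-y)]
    have h0e : (0:ℝ) ≤ 1 - Real.exp (-y) := by
      have h : Real.exp (-y) ≤ Real.exp 0 := Real.exp_le_exp.mpr (by linarith)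
      rw [Real.exp_zero] at h
      linarith
    have hy2 : y ≤ π ^ 2 * (j:ℝ) ^ 2 * (t - s) := by
      rw [hydef]
      nlinarith [mul_nonneg (mul_nonneg (mul_nonneg (sq_nonneg (j:ℝ)) (sq_nonneg π)) hτ.le)
        (sub_nonneg.mpr hc1)]
    have hsq : (1 - Real.exp (-(j : ℝ) ^ 2 * π ^ 2 * cjM j M * (t - s))) ^ 2
        ≤ min 1 ((π ^ 2 * (j:ℝ) ^ 2 * (t - s)) ^ 2) := by
      rw [harg]
      apply le_min
      · nlinarith
      · nlinarith
    calc Real.exp (-2 * (j : ℝ) ^ 2 * π ^ 2 * cjM j M * s) *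
          (1 - Real.exp (-(j : ℝ) ^ 2 * π ^ 2 * cjM j M * (t - s))) ^ 2
        ≤ (27 * (8 * (j:ℝ) ^ 2 * s) ^ (-α)) * min 1 ((π ^ 2 * (j:ℝ) ^ 2 * (t - s)) ^ 2) := by
          apply mul_le_mul (le_trans hexp1 hexp2) hsq (sq_nonneg _) (by positivity)
      _ = 27 * (8:ℝ) ^ (-α) * s ^ (-α) *
            (((j : ℝ)) ^ (-(2 * α)) * min 1 ((π ^ 2 * (j : ℝ) ^ 2 * (t - s)) ^ 2)) := by
          rw [hsplit, hjj]; ring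
  calc ∑ j ∈ Finset.Icc 1 (M - 1),
        Real.exp (-2 * (j : ℝ) ^ 2 * π ^ 2 * cjM j M * s) *
          (1 - Real.exp (-(j : ℝ) ^ 2 * π ^ 2 * cjM j M * (t - s))) ^ 2
      ≤ ∑ j ∈ Finset.Icc 1 (M - 1), 27 * (8:ℝ) ^ (-α) * s ^ (-α) *
          (((j : ℝ)) ^ (-(2 * α)) * min 1 ((π ^ 2 * (j : ℝ) ^ 2 * (t - s)) ^ 2)) :=
        Finset.sum_le_sum key
    _ = 27 * (8:ℝ) ^ (-α) * s ^ (-α) * ∑ j ∈ Finset.Icc 1 (M - 1),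
          (((j : ℝ)) ^ (-(2 * α)) * min 1 ((π ^ 2 * (j : ℝ) ^ 2 * (t - s)) ^ 2)) := by
        rw [← Finset.mul_sum]
    _ ≤ 27 * (8:ℝ) ^ (-α) * s ^ (-α) * (Cα α * (t - s) ^ (α - 1 / 2)) := by
        apply mul_le_mul_of_nonneg_left (core_sum hα1 hα2 hτ (M - 1)) (by positivity)
    _ = 27 * (8:ℝ) ^ (-α) * Cα α * s ^ (-α) * (t - s) ^ (α - 1 / 2) := by ring
end

section
/- Fix T > 0, N ≥ 1, and set κ_N^T(s) := T ⌊Ns/T⌋/N. Then there is a constant C (independent of M and N) such that for all M ≥ 2, x ∈ [0,1], and t ∈ [0,T], ∫_0^t Σ_{j=1}^{M−1} e^{2λ_j^M (t−s)} |e^{λ_j^M (s − κ_N^T(s))} − 1|² ds ≤ C (T/N)^{1/2}, where λ_j^M = −j²π² c_j^M with c_j^M ∈ [4/π², 1]. -/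
open Real

/-- Eigenvalues `λ_j^M = -j²π² c_j^M` of the scaled discrete Dirichlet Laplacian. -/
noncomputable def lamJM (j M : ℕ) : ℝ := -(j : ℝ) ^ 2 * π ^ 2 * cjM j M

/-- `κ_N^T(s) = T⌊Ns/T⌋/N`, the left endpoint of the time subinterval containing `s`. -/
noncomputable def kappaNT (T : ℝ) (N : ℕ) (s : ℝ) : ℝ :=
  T * (⌊(N : ℝ) * s / T⌋ : ℝ) / N

set_option maxHeartbeats 2000000

lemma lam_bounds {j M : ℕ} (hj : 1 ≤ j) (hjM : j ≤ M) :
    4 * (j:ℝ)^2 ≤ -(lamJM j M) ∧ -(lamJM j M) ≤ π^2 * (j:ℝ)^2 := by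
  have hj' : (1:ℝ) ≤ (j:ℝ) := by exact_mod_cast hj
  have hM' : (1:ℝ) ≤ (M:ℝ) := by exact_mod_cast hj.trans hjM
  have hjM' : (j:ℝ) ≤ (M:ℝ) := by exact_mod_cast hjM
  set x : ℝ := (j:ℝ) * π / (2 * (M:ℝ)) with hxdef
  have hx0 : 0 < x := by
    apply div_pos (by nlinarith [pi_pos]) (by linarith)
  have hxle : x ≤ π / 2 := by
    rw [hxdef, div_le_div_iff₀ (by linarith) (by norm_num)]
    nlinarith [pi_pos]
  have hs1 : Real.sin x ≤ x := (Real.sin_lt hx0).le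
  have hs2 : 2 / π * x ≤ Real.sin x := Real.mul_le_sin hx0.le hxle
  have hsin0 : 0 ≤ Real.sin x := le_trans (by positivity) hs2
  have hc : cjM j M = Real.sin x ^ 2 / x ^ 2 := rfl
  have hπ := pi_pos
  have hc_lower : 4 / π^2 ≤ cjM j M := by
    rw [hc]
    have h1 : (2 / π * x)^2 ≤ Real.sin x ^ 2 := pow_le_pow_left₀ (by positivity) hs2 2
    have h2 : (4 / π^2) = (2 / π * x)^2 / x^2 := by
      field_simp
      ring
    rw [h2]
    gcongr
  have hc_upper : cjM j M ≤ 1 := by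
    rw [hc, div_le_one (by positivity)]
    exact pow_le_pow_left₀ hsin0 hs1 2
  have hlam : -(lamJM j M) = (j:ℝ)^2 * π^2 * cjM j M := by
    unfold lamJM; ring
  constructor
  · rw [hlam]
    calc 4 * (j:ℝ)^2 = (j:ℝ)^2 * π^2 * (4 / π^2) := by field_simp
    _ ≤ (j:ℝ)^2 * π^2 * cjM j M := by gcongr
  · rw [hlam]
    calc (j:ℝ)^2 * π^2 * cjM j M ≤ (j:ℝ)^2 * π^2 * 1 := by gcongr
    _ = π^2 * (j:ℝ)^2 := by ring

lemma kappa_bounds {T : ℝ} (hT : 0 < T) {N : ℕ} (hN : 1 ≤ N) (s : ℝ) :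
    0 ≤ s - kappaNT T N s ∧ s - kappaNT T N s ≤ T / N := by
  have hN' : (0:ℝ) < (N:ℝ) := by exact_mod_cast hN
  have h1 : ((⌊(N:ℝ) * s / T⌋ : ℤ) : ℝ) ≤ (N:ℝ) * s / T := Int.floor_le _
  have h2 : (N:ℝ) * s / T - 1 < ((⌊(N:ℝ) * s / T⌋ : ℤ) : ℝ) := Int.sub_one_lt_floor _
  have hu : T * ((N:ℝ) * s / T) = s * N := by field_simp
  unfold kappaNT
  constructor
  · rw [sub_nonneg, div_le_iff₀ hN']
    nlinarith [mul_le_mul_of_nonneg_left h1 hT.le]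
  · rw [sub_le_iff_le_add, ← add_div, le_div_iff₀ hN']
    nlinarith [mul_lt_mul_of_pos_left h2 hT]

lemma integral_exp_le {lam t : ℝ} (hl : lam < 0) (ht : 0 ≤ t) :
    ∫ s in (0:ℝ)..t, Real.exp (2 * lam * (t - s)) ≤ 1 / (2 * (-lam)) := by
  have hne : (2 * lam) ≠ 0 := by intro h; nlinarith
  have hD : ∀ s ∈ Set.uIcc (0:ℝ) t,
      HasDerivAt (fun u => Real.exp (2 * lam * (t - u)) / (-(2 * lam)))
        (Real.exp (2 * lam * (t - s))) s := by
    intro s _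
    have h1 : HasDerivAt (fun u : ℝ => 2 * lam * (t - u)) (2 * lam * (-1)) s :=
      ((hasDerivAt_id s).const_sub t).const_mul (2 * lam)
    have h2 := (Real.hasDerivAt_exp (2 * lam * (t - s))).comp s h1
    have h3 := h2.div_const (-(2 * lam))
    rw [mul_neg_one, mul_neg, neg_div_neg_eq, mul_div_assoc, div_self hne, mul_one] at h3
    exact h3
  have hcont : Continuous fun s : ℝ => Real.exp (2 * lam * (t - s)) := by
    continuity
  have heq := intervalIntegral.integral_eq_sub_of_hasDerivAt hD
    (hcont.intervalIntegrable 0 t)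
  rw [heq]
  have he1 : 0 < Real.exp (2 * lam * (t - 0)) := Real.exp_pos _
  have he2 : Real.exp (2 * lam * (t - t)) = 1 := by simp
  rw [he2]
  have hpos : 0 < -(2 * lam) := by linarith
  have : Real.exp (2 * lam * (t - 0)) / (-(2 * lam)) ≥ 0 := by positivity
  have h4 : 1 / (-(2 * lam)) = 1 / (2 * (-lam)) := by ring_nf
  linarith [h4]

theorem kernel_time_discretization_estimate (T : ℝ) (hT : 0 < T) :
    ∃ C > 0, ∀ N : ℕ, 1 ≤ N → ∀ M : ℕ, 2 ≤ M → ∀ x : ℝ, x ∈ Set.Icc (0:ℝ) 1 →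
      ∀ t : ℝ, t ∈ Set.Icc 0 T →
      (∫ s in (0:ℝ)..t, ∑ j ∈ Finset.Icc 1 (M - 1),
          Real.exp (2 * lamJM j M * (t - s)) *
            (Real.exp (lamJM j M * (s - kappaNT T N s)) - 1) ^ 2) ≤
        C * (T / N) ^ ((1:ℝ)/2) := by
  refine ⟨π^2/2 * (1 + Real.sqrt T)^3 + 1, by positivity, ?_⟩
  intro N hN M hM x hx t ht
  obtain ⟨ht0, htT⟩ := ht
  have hN' : (0:ℝ) < (N:ℝ) := by exact_mod_cast hN
  set Δ : ℝ := T / N with hΔdef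
  have hΔ : 0 < Δ := div_pos hT hN'
  have hΔT : Δ ≤ T := by
    rw [hΔdef, div_le_iff₀ hN']
    nlinarith [hN' , (by exact_mod_cast hN : (1:ℝ) ≤ (N:ℝ))]
  set r := Real.sqrt Δ with hrdef
  have hr : 0 < r := Real.sqrt_pos.2 hΔ
  have hr2 : r^2 = Δ := Real.sq_sqrt hΔ.le
  have hrT : r ≤ Real.sqrt T := Real.sqrt_le_sqrt hΔT
  set j0 := ⌈1/r⌉₊ with hj0def
  have hj01 : 1 ≤ j0 := Nat.one_le_ceil_iff.2 (by positivity)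
  have hj0pos : (0:ℝ) < (j0:ℝ) := by exact_mod_cast hj01
  have hj0l : 1/r ≤ (j0:ℝ) := Nat.le_ceil _
  have hj0u : (j0:ℝ) ≤ (1 + Real.sqrt T)/r := by
    have h1 : ((j0:ℝ)) < 1/r + 1 := Nat.ceil_lt_add_one (by positivity)
    have h2 : (1:ℝ) ≤ Real.sqrt T / r := (one_le_div hr).2 hrT
    have h3 : (1 + Real.sqrt T)/r = 1/r + Real.sqrt T/r := add_div _ _ _
    linarith
  have hj0inv : 1/(j0:ℝ) ≤ r := by
    rw [div_le_iff₀ hj0pos]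
    rw [div_le_iff₀ hr] at hj0l
    linarith [mul_comm r (j0:ℝ)]
  set K := M - 1 with hKdef
  clear_value Δ r j0 K
  -- measurability of kappa
  have hκm : Measurable (fun s : ℝ => s - kappaNT T N s) := by
    apply measurable_id.sub
    unfold kappaNT
    exact ((measurable_from_top.comp (Int.measurable_floor.comp
      ((measurable_const.mul measurable_id).div_const T))).const_mul T).div_const (N:ℝ)
  -- integrability of each summand
  have hint : ∀ j ∈ Finset.Icc 1 K, IntervalIntegrable
      (fun s => Real.exp (2 * lamJM j M * (t - s)) *
        (Real.exp (lamJM j M * (s - kappaNT T N s)) - 1) ^ 2) MeasureTheory.volume 0 t := by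
    intro j hj
    obtain ⟨hj1, hjK⟩ := Finset.mem_Icc.1 hj
    have hj1' : (1:ℝ) ≤ (j:ℝ) := by exact_mod_cast hj1
    obtain ⟨hA4, _⟩ := lam_bounds hj1 (by omega : j ≤ M)
    have hlneg : lamJM j M < 0 := by nlinarith
    have hfm : Measurable (fun s => Real.exp (2 * lamJM j M * (t - s)) *
        (Real.exp (lamJM j M * (s - kappaNT T N s)) - 1) ^ 2) := by
      apply Measurable.mul
      · exact (((measurable_const.sub measurable_id).const_mul (2 * lamJM j M)).exp)
      · exact ((hκm.const_mul (lamJM j M)).exp.sub measurable_const).pow_const 2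
    apply IntervalIntegrable.mono_fun' (g := fun _ => (1:ℝ)) (intervalIntegrable_const)
      hfm.aestronglyMeasurable
    filter_upwards [MeasureTheory.ae_restrict_mem measurableSet_uIoc] with s hs
    rw [Set.uIoc_of_le ht0] at hs
    obtain ⟨hd0, hdΔ⟩ := kappa_bounds hT hN s
    have e1 : Real.exp (2 * lamJM j M * (t - s)) ≤ 1 :=
      Real.exp_le_one_iff.2 (by nlinarith [hs.2])
    have e1p : 0 < Real.exp (2 * lamJM j M * (t - s)) := Real.exp_pos _
    have e2 : Real.exp (lamJM j M * (s - kappaNT T N s)) ≤ 1 :=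
      Real.exp_le_one_iff.2 (by nlinarith)
    have e2p : 0 < Real.exp (lamJM j M * (s - kappaNT T N s)) := Real.exp_pos _
    rw [Real.norm_eq_abs, abs_of_nonneg (by positivity)]
    have hsq : (Real.exp (lamJM j M * (s - kappaNT T N s)) - 1)^2 ≤ 1 := by nlinarith
    calc Real.exp (2 * lamJM j M * (t - s)) *
          (Real.exp (lamJM j M * (s - kappaNT T N s)) - 1) ^ 2
        ≤ 1 * 1 := mul_le_mul e1 hsq (sq_nonneg _) zero_le_one
      _ = 1 := mul_one 1
  -- per-j bound on the integral
  have hstep : ∀ j ∈ Finset.Icc 1 K,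
      (∫ s in (0:ℝ)..t, Real.exp (2 * lamJM j M * (t - s)) *
        (Real.exp (lamJM j M * (s - kappaNT T N s)) - 1) ^ 2)
      ≤ min ((8*(j:ℝ)^2)⁻¹) (π^2*(j:ℝ)^2*Δ^2/2) := by
    intro j hj
    obtain ⟨hj1, hjK⟩ := Finset.mem_Icc.1 hj
    have hj1' : (1:ℝ) ≤ (j:ℝ) := by exact_mod_cast hj1
    obtain ⟨hA4, hAπ⟩ := lam_bounds hj1 (by omega : j ≤ M)
    have hlneg : lamJM j M < 0 := by nlinarith
    set A := -(lamJM j M) with hAdef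
    have hA0 : 0 < A := by nlinarith
    set m := min 1 ((A*Δ)^2) with hmdef
    have hm0 : 0 ≤ m := le_min zero_le_one (by positivity)
    have hm1 : m ≤ 1 := min_le_left _ _
    have hm2 : m ≤ (A*Δ)^2 := min_le_right _ _
    have hgc : Continuous (fun s : ℝ => Real.exp (2 * lamJM j M * (t - s)) * m) := by
      continuity
    have hpt : ∀ s ∈ Set.Icc (0:ℝ) t,
        Real.exp (2 * lamJM j M * (t - s)) *
          (Real.exp (lamJM j M * (s - kappaNT T N s)) - 1) ^ 2
        ≤ Real.exp (2 * lamJM j M * (t - s)) * m := by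
      intro s hs
      obtain ⟨hd0, hdΔ⟩ := kappa_bounds hT hN s
      set e := Real.exp (lamJM j M * (s - kappaNT T N s)) with hedef
      have he1 : e ≤ 1 := Real.exp_le_one_iff.2 (by nlinarith)
      have hep : 0 < e := Real.exp_pos _
      have hle : 1 - e ≤ A * Δ := by
        have := Real.add_one_le_exp (lamJM j M * (s - kappaNT T N s))
        rw [← hedef] at this
        nlinarith
      have hsq : (e - 1)^2 ≤ m := by
        apply le_min
        · nlinarith
        · nlinarith [mul_nonneg hA0.le hΔ.le]
      have := Real.exp_pos (2 * lamJM j M * (t - s))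
      nlinarith
    calc (∫ s in (0:ℝ)..t, Real.exp (2 * lamJM j M * (t - s)) *
            (Real.exp (lamJM j M * (s - kappaNT T N s)) - 1) ^ 2)
        ≤ ∫ s in (0:ℝ)..t, Real.exp (2 * lamJM j M * (t - s)) * m :=
          intervalIntegral.integral_mono_on ht0 (hint j hj)
            (hgc.intervalIntegrable 0 t) hpt
      _ = (∫ s in (0:ℝ)..t, Real.exp (2 * lamJM j M * (t - s))) * m :=
          intervalIntegral.integral_mul_const _ _
      _ ≤ (1/(2*A)) * m := by
          apply mul_le_mul_of_nonneg_right _ hm0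
          exact integral_exp_le hlneg ht0
      _ ≤ min ((8*(j:ℝ)^2)⁻¹) (π^2*(j:ℝ)^2*Δ^2/2) := by
          apply le_min
          · calc (1/(2*A)) * m ≤ (1/(2*A)) * 1 := by
                  apply mul_le_mul_of_nonneg_left hm1 (by positivity)
              _ = 1/(2*A) := mul_one _
              _ ≤ (8*(j:ℝ)^2)⁻¹ := by
                  rw [one_div]
                  apply inv_anti₀ (by positivity) (by nlinarith)
          · calc (1/(2*A)) * m ≤ (1/(2*A)) * (A*Δ)^2 := by
                  apply mul_le_mul_of_nonneg_left hm2 (by positivity)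
              _ = A * Δ^2 / 2 := by field_simp
              _ ≤ π^2*(j:ℝ)^2*Δ^2/2 := by nlinarith [sq_nonneg Δ, hΔ]
  -- sum the bounds and split the series
  have hsum : (∫ s in (0:ℝ)..t, ∑ j ∈ Finset.Icc 1 K,
        Real.exp (2 * lamJM j M * (t - s)) *
          (Real.exp (lamJM j M * (s - kappaNT T N s)) - 1) ^ 2)
      ≤ ∑ j ∈ Finset.Icc 1 K, min ((8*(j:ℝ)^2)⁻¹) (π^2*(j:ℝ)^2*Δ^2/2) := by
    rw [intervalIntegral.integral_finset_sum hint]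
    exact Finset.sum_le_sum hstep
  have hsplit : ∑ j ∈ Finset.Icc 1 K, min ((8*(j:ℝ)^2)⁻¹) (π^2*(j:ℝ)^2*Δ^2/2)
      ≤ (∑ j ∈ Finset.Icc 1 j0, π^2*(j:ℝ)^2*Δ^2/2)
        + ∑ j ∈ Finset.Ioc j0 K, (8*(j:ℝ)^2)⁻¹ := by
    have hsub : Finset.Icc 1 K ⊆ Finset.Icc 1 j0 ∪ Finset.Ioc j0 K := by
      intro j hj
      simp only [Finset.mem_Icc, Finset.mem_Ioc, Finset.mem_union] at *
      omega
    have hdisj : Disjoint (Finset.Icc 1 j0) (Finset.Ioc j0 K) := by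
      simp only [Finset.disjoint_left, Finset.mem_Icc, Finset.mem_Ioc]
      omega
    calc ∑ j ∈ Finset.Icc 1 K, min ((8*(j:ℝ)^2)⁻¹) (π^2*(j:ℝ)^2*Δ^2/2)
        ≤ ∑ j ∈ Finset.Icc 1 j0 ∪ Finset.Ioc j0 K,
            min ((8*(j:ℝ)^2)⁻¹) (π^2*(j:ℝ)^2*Δ^2/2) := by
          apply Finset.sum_le_sum_of_subset_of_nonneg hsub
          intro i hi _
          have hi1 : 1 ≤ i := by
            simp only [Finset.mem_union, Finset.mem_Icc, Finset.mem_Ioc] at hi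
            omega
          have : (0:ℝ) < (i:ℝ) := by exact_mod_cast hi1
          exact le_min (by positivity) (by positivity)
      _ = (∑ j ∈ Finset.Icc 1 j0, min ((8*(j:ℝ)^2)⁻¹) (π^2*(j:ℝ)^2*Δ^2/2))
          + ∑ j ∈ Finset.Ioc j0 K, min ((8*(j:ℝ)^2)⁻¹) (π^2*(j:ℝ)^2*Δ^2/2) :=
          Finset.sum_union hdisj
      _ ≤ _ := add_le_add
          (Finset.sum_le_sum fun i _ => min_le_right _ _)
          (Finset.sum_le_sum fun i _ => min_le_left _ _)
  have hfirst : (∑ j ∈ Finset.Icc 1 j0, π^2*(j:ℝ)^2*Δ^2/2)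
      ≤ (j0:ℝ) * (π^2*(j0:ℝ)^2*Δ^2/2) := by
    calc (∑ j ∈ Finset.Icc 1 j0, π^2*(j:ℝ)^2*Δ^2/2)
        ≤ ∑ _j ∈ Finset.Icc 1 j0, π^2*(j0:ℝ)^2*Δ^2/2 := by
          apply Finset.sum_le_sum
          intro i hi
          have hi' : (i:ℝ) ≤ (j0:ℝ) := by exact_mod_cast (Finset.mem_Icc.1 hi).2
          gcongr
      _ = (j0:ℝ) * (π^2*(j0:ℝ)^2*Δ^2/2) := by
          rw [Finset.sum_const, Nat.card_Icc, Nat.add_sub_cancel, nsmul_eq_mul]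
  have hsecond : (∑ j ∈ Finset.Ioc j0 K, (8*(j:ℝ)^2)⁻¹) ≤ 8⁻¹ * (j0:ℝ)⁻¹ := by
    have hre : ∀ j : ℕ, (8*(j:ℝ)^2)⁻¹ = 8⁻¹ * ((j:ℝ)^2)⁻¹ := fun j => by
      rw [mul_inv]
    calc (∑ j ∈ Finset.Ioc j0 K, (8*(j:ℝ)^2)⁻¹)
        = 8⁻¹ * ∑ j ∈ Finset.Ioc j0 K, ((j:ℝ)^2)⁻¹ := by
          rw [Finset.mul_sum]
          exact Finset.sum_congr rfl fun j _ => hre j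
      _ ≤ 8⁻¹ * (j0:ℝ)⁻¹ := by
          apply mul_le_mul_of_nonneg_left _ (by norm_num)
          rcases le_or_gt j0 K with h | h
          · have := sum_Ioc_inv_sq_le_sub (α := ℝ) (by omega : j0 ≠ 0) h
            have hK0 : (0:ℝ) ≤ ((K:ℝ))⁻¹ := by positivity
            linarith
          · rw [Finset.Ioc_eq_empty (by omega)]
            simp
  -- final numeric estimate
  have hkey1 : (j0:ℝ) * (π^2*(j0:ℝ)^2*Δ^2/2) ≤ π^2/2 * (1 + Real.sqrt T)^3 * r := by
    have hcube : (j0:ℝ)^3 ≤ ((1 + Real.sqrt T)/r)^3 :=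
      pow_le_pow_left₀ (Nat.cast_nonneg j0) hj0u 3
    have hid : ((1 + Real.sqrt T)/r)^3 * Δ^2 = (1 + Real.sqrt T)^3 * r := by
      rw [← hr2]; field_simp
    calc (j0:ℝ) * (π^2*(j0:ℝ)^2*Δ^2/2) = π^2/2 * ((j0:ℝ)^3 * Δ^2) := by ring
      _ ≤ π^2/2 * (((1 + Real.sqrt T)/r)^3 * Δ^2) := by
          apply mul_le_mul_of_nonneg_left _ (by positivity)
          exact mul_le_mul_of_nonneg_right hcube (by positivity)
      _ = π^2/2 * (1 + Real.sqrt T)^3 * r := by rw [hid]; ring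
  have hkey2 : (8:ℝ)⁻¹ * (j0:ℝ)⁻¹ ≤ 1 * r := by
    rw [← one_div (j0:ℝ)] at *
    nlinarith
  have hrpow : r = Δ ^ ((1:ℝ)/2) := hrdef.trans (Real.sqrt_eq_rpow Δ)
  calc (∫ s in (0:ℝ)..t, ∑ j ∈ Finset.Icc 1 K,
        Real.exp (2 * lamJM j M * (t - s)) *
          (Real.exp (lamJM j M * (s - kappaNT T N s)) - 1) ^ 2)
      ≤ (∑ j ∈ Finset.Icc 1 j0, π^2*(j:ℝ)^2*Δ^2/2)
        + ∑ j ∈ Finset.Ioc j0 K, (8*(j:ℝ)^2)⁻¹ := le_trans hsum hsplit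
    _ ≤ π^2/2 * (1 + Real.sqrt T)^3 * r + 1 * r := by
        apply add_le_add (le_trans hfirst hkey1) (le_trans hsecond hkey2)
    _ = (π^2/2 * (1 + Real.sqrt T)^3 + 1) * r := by ring
    _ = (π^2/2 * (1 + Real.sqrt T)^3 + 1) * Δ ^ ((1:ℝ)/2) := by rw [hrpow]
end
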